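/- arXiv:2310.11961 — 2 statements merged into one kernel-verified Lean document; each statement's English description precedes it below -/
import Mathlib

section
/- Let p ∈ (1,∞) and let ρ₁, ρ₂ be probability densities on ℝ^d with finite p-th moments. Then W_p(ρ₁·Leb, ρ₂·Leb)^p ≤ 2^{p-1} ∫_{ℝ^d} |x|^p |ρ₁(x) − ρ₂(x)| dx. -/
open MeasureTheory ENNReal

/-- `p`-th power of the `p`-Wasserstein distance, defined as the infimum over
couplings of `∫ ‖x - y‖^p dγ`. -/
noncomputable def WpPow (p : ℝ) {d : ℕ}
    (μ ν : Measure (Fin d → ℝ)) : ℝ≥0∞ :=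
  ⨅ (γ : Measure ((Fin d → ℝ) × (Fin d → ℝ)))
    (_ : γ.map Prod.fst = μ ∧ γ.map Prod.snd = ν),
    ∫⁻ z, ENNReal.ofReal (‖z.1 - z.2‖ ^ p) ∂γ

lemma aux_rpow_ineq {p : ℝ} (hp : 1 ≤ p) (a b : ℝ) (ha : 0 ≤ a) (hb : 0 ≤ b) :
    (a + b) ^ p ≤ 2 ^ (p - 1) * (a ^ p + b ^ p) := by
  have h := NNReal.rpow_add_le_mul_rpow_add_rpow a.toNNReal b.toNNReal hp
  rw [← NNReal.coe_le_coe] at h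
  simpa [NNReal.coe_rpow, Real.coe_toNNReal a ha, Real.coe_toNNReal b hb] using h

/-- For two probability densities `ρ₁, ρ₂` with finite `p`-th
moments, `W_p(ρ₁·Leb, ρ₂·Leb)^p ≤ 2^{p-1} ∫ ‖x‖^p |ρ₁ x - ρ₂ x| dx`. -/
theorem wasserstein_density_difference_estimate (d : ℕ) (p : ℝ) (hp : 1 < p)
    (ρ₁ ρ₂ : (Fin d → ℝ) → ℝ)
    (h₁0 : ∀ x, 0 ≤ ρ₁ x) (h₂0 : ∀ x, 0 ≤ ρ₂ x)
    (h₁meas : Measurable ρ₁) (h₂meas : Measurable ρ₂)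
    (h₁1 : ∫ x, ρ₁ x = 1) (h₂1 : ∫ x, ρ₂ x = 1)
    (h₁p : Integrable (fun x : Fin d → ℝ => ‖x‖ ^ p * ρ₁ x))
    (h₂p : Integrable (fun x : Fin d → ℝ => ‖x‖ ^ p * ρ₂ x)) :
    WpPow p (volume.withDensity (fun x => ENNReal.ofReal (ρ₁ x)))
        (volume.withDensity (fun x => ENNReal.ofReal (ρ₂ x)))
      ≤ ENNReal.ofReal (2 ^ (p - 1) * ∫ x, ‖x‖ ^ p * |ρ₁ x - ρ₂ x|) := by
  have hp0 : (0 : ℝ) < p := by linarith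
  -- basic integrability
  have hρ₁int : Integrable ρ₁ := by
    by_contra h
    rw [integral_undef h] at h₁1
    norm_num at h₁1
  have hρ₂int : Integrable ρ₂ := by
    by_contra h
    rw [integral_undef h] at h₂1
    norm_num at h₂1
  -- densities in ℝ≥0∞
  set f :(Fin d → ℝ) → ℝ≥0∞ := fun x => ENNReal.ofReal (ρ₁ x) with hfdef
  set g :(Fin d → ℝ) → ℝ≥0∞ := fun x => ENNReal.ofReal (ρ₂ x) with hgdef
  set m :(Fin d → ℝ) → ℝ≥0∞ := fun x => min (f x) (g x) with hmdef
  set h₁ :(Fin d → ℝ) → ℝ≥0∞ := fun x => f x - m x with hh₁def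
  set h₂ :(Fin d → ℝ) → ℝ≥0∞ := fun x => g x - m x with hh₂def
  have hfm : Measurable f := h₁meas.ennreal_ofReal
  have hgm : Measurable g := h₂meas.ennreal_ofReal
  have hmm : Measurable m := hfm.min hgm
  have hh₁m : Measurable h₁ := hfm.sub hmm
  have hh₂m : Measurable h₂ := hgm.sub hmm
  have hmf : ∀ x, m x ≤ f x := fun x => min_le_left _ _
  have hmg : ∀ x, m x ≤ g x := fun x => min_le_right _ _
  -- total masses
  have hIf : ∫⁻ x, f x = 1 := by
    rw [hfdef, ← ofReal_integral_eq_lintegral_ofReal hρ₁int (ae_of_all _ h₁0), h₁1,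
      ENNReal.ofReal_one]
  have hIg : ∫⁻ x, g x = 1 := by
    rw [hgdef, ← ofReal_integral_eq_lintegral_ofReal hρ₂int (ae_of_all _ h₂0), h₂1,
      ENNReal.ofReal_one]
  have hIm_le : ∫⁻ x, m x ≤ 1 := by
    calc ∫⁻ x, m x ≤ ∫⁻ x, f x := lintegral_mono hmf
    _ = 1 := hIf
  have hImfin : ∫⁻ x, m x ≠ ∞ := (hIm_le.trans_lt one_lt_top).ne
  -- mass of remainders
  have hIh₁ : ∫⁻ x, h₁ x = 1 - ∫⁻ x, m x := by
    rw [hh₁def]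
    rw [lintegral_sub hmm hImfin (ae_of_all _ hmf), hIf]
  have hIh₂ : ∫⁻ x, h₂ x = 1 - ∫⁻ x, m x := by
    rw [hh₂def]
    rw [lintegral_sub hmm hImfin (ae_of_all _ hmg), hIg]
  set ε : ℝ≥0∞ := ∫⁻ x, h₁ x with hεdef
  have hIh₂' : ∫⁻ x, h₂ x = ε := by rw [hIh₂]; exact hIh₁.symm
  have hεle : ε ≤ 1 := by
    rw [hIh₁]; exact tsub_le_self
  have hεfin : ε ≠ ∞ := (hεle.trans_lt one_lt_top).ne
  -- the measures
  set ν : Measure (Fin d → ℝ) := volume.withDensity m with hνdef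
  set ν₁ : Measure (Fin d → ℝ) := volume.withDensity h₁ with hν₁def
  set ν₂ : Measure (Fin d → ℝ) := volume.withDensity h₂ with hν₂def
  haveI : IsFiniteMeasure ν := isFiniteMeasure_withDensity hImfin
  haveI : IsFiniteMeasure ν₁ := isFiniteMeasure_withDensity (by rw [← hεdef]; exact hεfin)
  haveI : IsFiniteMeasure ν₂ := isFiniteMeasure_withDensity (ne_of_eq_of_ne hIh₂' hεfin)
  have hν₁univ : ν₁ Set.univ = ε := by
    rw [hν₁def, withDensity_apply _ MeasurableSet.univ, setLIntegral_univ]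
  have hν₂univ : ν₂ Set.univ = ε := by
    rw [hν₂def, withDensity_apply _ MeasurableSet.univ, setLIntegral_univ, hIh₂']
  -- splitting of the target measures
  have hfeq : f = m + h₁ := funext fun x => (add_tsub_cancel_of_le (hmf x)).symm
  have hgeq : g = m + h₂ := funext fun x => (add_tsub_cancel_of_le (hmg x)).symm
  have hsplit₁ : volume.withDensity f = ν + ν₁ := by
    rw [hνdef, hν₁def, ← withDensity_add_left hmm, ← hfeq]
  have hsplit₂ : volume.withDensity g = ν + ν₂ := by
    rw [hνdef, hν₂def, ← withDensity_add_left hmm, ← hgeq]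
  -- cost function facts
  have hdiag : Measurable fun x : Fin d → ℝ => (x, x) := measurable_id.prodMk measurable_id
  have hcostm : Measurable fun z : (Fin d → ℝ) × (Fin d → ℝ) => ENNReal.ofReal (‖z.1 - z.2‖ ^ p) := by
    apply Measurable.ennreal_ofReal
    exact ((Real.continuous_rpow_const hp0.le).comp
      ((continuous_fst.sub continuous_snd).norm)).measurable
  have hdiagcost : ∀ (μ' : Measure (Fin d → ℝ)),
      ∫⁻ z, ENNReal.ofReal (‖z.1 - z.2‖ ^ p) ∂(μ'.map fun x => (x, x)) = 0 := by
    intro μ'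
    rw [lintegral_map hcostm hdiag]
    simp [Real.zero_rpow hp0.ne']
  have hmapfst : ∀ (μ' : Measure (Fin d → ℝ)), (μ'.map fun x => (x, x)).map Prod.fst = μ' := by
    intro μ'
    rw [Measure.map_map measurable_fst hdiag]
    exact Measure.map_id
  have hmapsnd : ∀ (μ' : Measure (Fin d → ℝ)), (μ'.map fun x => (x, x)).map Prod.snd = μ' := by
    intro μ'
    rw [Measure.map_map measurable_snd hdiag]
    exact Measure.map_id
  -- main case split
  by_cases hε : ε = 0
  · -- remainders vanish; diagonal coupling
    have hν₁0 : ν₁ = 0 := by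
      rw [hν₁def]
      exact (withDensity_eq_zero_iff hh₁m.aemeasurable).mpr ((lintegral_eq_zero_iff hh₁m).mp hε)
    have hν₂0 : ν₂ = 0 := by
      rw [hν₂def]
      exact (withDensity_eq_zero_iff hh₂m.aemeasurable).mpr
        ((lintegral_eq_zero_iff hh₂m).mp (by rw [hIh₂']; exact hε))
    have hγ : (Measure.map (fun x => (x, x)) ν).map Prod.fst = volume.withDensity f ∧
        (Measure.map (fun x => (x, x)) ν).map Prod.snd = volume.withDensity g := by
      constructor
      · rw [hmapfst, hsplit₁, hν₁0, add_zero]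
      · rw [hmapsnd, hsplit₂, hν₂0, add_zero]
    calc WpPow p (volume.withDensity f) (volume.withDensity g)
        ≤ ∫⁻ z, ENNReal.ofReal (‖z.1 - z.2‖ ^ p) ∂(Measure.map (fun x => (x, x)) ν) := by
          unfold WpPow; exact iInf₂_le (Measure.map (fun x => (x, x)) ν) hγ
      _ = 0 := hdiagcost ν
      _ ≤ _ := zero_le
  · -- nondegenerate case
    set γ : Measure ((Fin d → ℝ) × (Fin d → ℝ)) := Measure.map (fun x => (x, x)) ν + ε⁻¹ • (ν₁.prod ν₂) with hγdef
    have hγfst : γ.map Prod.fst = volume.withDensity f := by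
      rw [hγdef, Measure.map_add _ _ measurable_fst, Measure.map_smul, Measure.map_fst_prod,
        hmapfst, hν₂univ, smul_smul, ENNReal.inv_mul_cancel hε hεfin, one_smul, hsplit₁]
    have hγsnd : γ.map Prod.snd = volume.withDensity g := by
      rw [hγdef, Measure.map_add _ _ measurable_snd, Measure.map_smul, Measure.map_snd_prod,
        hmapsnd, hν₁univ, smul_smul, ENNReal.inv_mul_cancel hε hεfin, one_smul, hsplit₂]
    -- moment function
    set F :(Fin d → ℝ) → ℝ≥0∞ := fun x => ENNReal.ofReal (‖x‖ ^ p) with hFdef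
    have hFm : Measurable F := by
      apply Measurable.ennreal_ofReal
      exact ((Real.continuous_rpow_const hp0.le).comp continuous_norm).measurable
    set C : ℝ≥0∞ := ENNReal.ofReal (2 ^ (p - 1)) with hCdef
    -- pointwise bound on the cost
    have hpt : ∀ z : (Fin d → ℝ) × (Fin d → ℝ), ENNReal.ofReal (‖z.1 - z.2‖ ^ p) ≤ C * (F z.1 + F z.2) := by
      intro z
      have h1 : ‖z.1 - z.2‖ ^ p ≤ (‖z.1‖ + ‖z.2‖) ^ p :=
        Real.rpow_le_rpow (norm_nonneg _) (norm_sub_le _ _) hp0.le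
      have h2 : (‖z.1‖ + ‖z.2‖) ^ p ≤ 2 ^ (p - 1) * (‖z.1‖ ^ p + ‖z.2‖ ^ p) :=
        aux_rpow_ineq hp.le _ _ (norm_nonneg _) (norm_nonneg _)
      calc ENNReal.ofReal (‖z.1 - z.2‖ ^ p)
          ≤ ENNReal.ofReal (2 ^ (p - 1) * (‖z.1‖ ^ p + ‖z.2‖ ^ p)) :=
            ENNReal.ofReal_le_ofReal (h1.trans h2)
        _ = C * (F z.1 + F z.2) := by
            rw [hCdef, hFdef, ENNReal.ofReal_mul (Real.rpow_nonneg (by norm_num) _),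
              ENNReal.ofReal_add (Real.rpow_nonneg (norm_nonneg _) _)
                (Real.rpow_nonneg (norm_nonneg _) _)]
    -- moments of remainders
    set A : ℝ≥0∞ := ∫⁻ x, F x ∂ν₁ with hAdef
    set B : ℝ≥0∞ := ∫⁻ x, F x ∂ν₂ with hBdef
    -- bound the cost of the product part
    have hprodcost : ∫⁻ z, ENNReal.ofReal (‖z.1 - z.2‖ ^ p) ∂(ν₁.prod ν₂)
        ≤ C * (ε * (A + B)) := by
      calc ∫⁻ z, ENNReal.ofReal (‖z.1 - z.2‖ ^ p) ∂(ν₁.prod ν₂)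
          ≤ ∫⁻ z, C * (F z.1 + F z.2) ∂(ν₁.prod ν₂) := lintegral_mono hpt
        _ = C * ∫⁻ z, (F z.1 + F z.2) ∂(ν₁.prod ν₂) := by
            rw [lintegral_const_mul C (show Measurable fun z : (Fin d → ℝ) × (Fin d → ℝ) => F z.1 + F z.2 from (hFm.comp measurable_fst).add (hFm.comp measurable_snd))]
        _ = C * ((∫⁻ z : (Fin d → ℝ) × (Fin d → ℝ), F z.1 ∂(ν₁.prod ν₂)) + ∫⁻ z : (Fin d → ℝ) × (Fin d → ℝ), F z.2 ∂(ν₁.prod ν₂)) := by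
            rw [lintegral_add_left (show Measurable fun z : (Fin d → ℝ) × (Fin d → ℝ) => F z.1 from hFm.comp measurable_fst)]
        _ = C * (ε * (A + B)) := by
            rw [← lintegral_map hFm measurable_fst, ← lintegral_map hFm measurable_snd,
              Measure.map_fst_prod, Measure.map_snd_prod, hν₁univ, hν₂univ,
              lintegral_smul_measure, lintegral_smul_measure]
            ring
    -- total cost bound
    have hcost : ∫⁻ z, ENNReal.ofReal (‖z.1 - z.2‖ ^ p) ∂γ ≤ C * (A + B) := by
      rw [hγdef, lintegral_add_measure, lintegral_smul_measure, hdiagcost, zero_add]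
      calc ε⁻¹ * ∫⁻ z, ENNReal.ofReal (‖z.1 - z.2‖ ^ p) ∂(ν₁.prod ν₂)
          ≤ ε⁻¹ * (C * (ε * (A + B))) := mul_le_mul_right hprodcost _
        _ = (ε⁻¹ * ε) * (C * (A + B)) := by ring
        _ = C * (A + B) := by rw [ENNReal.inv_mul_cancel hε hεfin, one_mul]
    -- identify A + B with the ∫ ‖x‖^p |ρ₁ - ρ₂|
    have hkey : ∀ x, h₁ x + h₂ x = ENNReal.ofReal |ρ₁ x - ρ₂ x| := by
      intro x
      show f x - m x + (g x - m x) = ENNReal.ofReal |ρ₁ x - ρ₂ x|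
      rcases le_total (ρ₁ x) (ρ₂ x) with h | h
      · have hfg : f x ≤ g x := ENNReal.ofReal_le_ofReal h
        have hm : m x = f x := min_eq_left hfg
        rw [hm, tsub_self, zero_add]
        show ENNReal.ofReal (ρ₂ x) - ENNReal.ofReal (ρ₁ x) = _
        rw [← ENNReal.ofReal_sub _ (h₁0 x), abs_sub_comm, abs_of_nonneg (sub_nonneg.mpr h)]
      · have hgf : g x ≤ f x := ENNReal.ofReal_le_ofReal h
        have hm : m x = g x := min_eq_right hgf
        rw [hm, tsub_self, add_zero]
        show ENNReal.ofReal (ρ₁ x) - ENNReal.ofReal (ρ₂ x) = _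
        rw [← ENNReal.ofReal_sub _ (h₂0 x), abs_of_nonneg (sub_nonneg.mpr h)]
    have hdiffint : Integrable (fun x : Fin d → ℝ => ‖x‖ ^ p * |ρ₁ x - ρ₂ x|) := by
      refine (h₁p.add h₂p).mono ?_ (ae_of_all _ ?_)
      · exact (((Real.continuous_rpow_const hp0.le).comp continuous_norm).measurable.mul
          (h₁meas.sub h₂meas).abs).aestronglyMeasurable
      · intro x
        simp only [Pi.add_apply]
        have hxnn : (0:ℝ) ≤ ‖x‖ ^ p := Real.rpow_nonneg (norm_nonneg _) _
        have h1 : |ρ₁ x - ρ₂ x| ≤ ρ₁ x + ρ₂ x := by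
          calc |ρ₁ x - ρ₂ x| ≤ |ρ₁ x| + |ρ₂ x| := abs_sub _ _
          _ = ρ₁ x + ρ₂ x := by rw [abs_of_nonneg (h₁0 x), abs_of_nonneg (h₂0 x)]
        rw [Real.norm_eq_abs, Real.norm_eq_abs, abs_of_nonneg (mul_nonneg hxnn (abs_nonneg _)),
          abs_of_nonneg (add_nonneg (mul_nonneg hxnn (h₁0 x)) (mul_nonneg hxnn (h₂0 x)))]
        calc ‖x‖ ^ p * |ρ₁ x - ρ₂ x| ≤ ‖x‖ ^ p * (ρ₁ x + ρ₂ x) :=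
              mul_le_mul_of_nonneg_left h1 hxnn
          _ = ‖x‖ ^ p * ρ₁ x + ‖x‖ ^ p * ρ₂ x := by ring
    have hAB : A + B = ENNReal.ofReal (∫ x, ‖x‖ ^ p * |ρ₁ x - ρ₂ x|) := by
      have e₁ : A = ∫⁻ x, h₁ x * F x := by
        rw [hAdef, hν₁def, lintegral_withDensity_eq_lintegral_mul volume hh₁m hFm]
        simp only [Pi.mul_apply]
      have e₂ : B = ∫⁻ x, h₂ x * F x := by
        rw [hBdef, hν₂def, lintegral_withDensity_eq_lintegral_mul volume hh₂m hFm]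
        simp only [Pi.mul_apply]
      rw [e₁, e₂, ← lintegral_add_left (show Measurable fun x => h₁ x * F x from hh₁m.mul hFm)]
      rw [ofReal_integral_eq_lintegral_ofReal hdiffint
        (ae_of_all _ fun x => mul_nonneg (Real.rpow_nonneg (norm_nonneg _) _) (abs_nonneg _))]
      congr 1
      funext x
      rw [← add_mul, hkey x]
      show ENNReal.ofReal |ρ₁ x - ρ₂ x| * ENNReal.ofReal (‖x‖ ^ p) = _
      rw [mul_comm, ← ENNReal.ofReal_mul (Real.rpow_nonneg (norm_nonneg _) _)]
    -- conclude
    calc WpPow p (volume.withDensity f) (volume.withDensity g)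
        ≤ ∫⁻ z, ENNReal.ofReal (‖z.1 - z.2‖ ^ p) ∂γ := by
          unfold WpPow; exact iInf₂_le γ ⟨hγfst, hγsnd⟩
      _ ≤ C * (A + B) := hcost
      _ = ENNReal.ofReal (2 ^ (p - 1) * ∫ x, ‖x‖ ^ p * |ρ₁ x - ρ₂ x|) := by
          rw [hAB, hCdef, ← ENNReal.ofReal_mul (Real.rpow_nonneg (by norm_num) _)]
end

section
/- Let (X, d) be a metric space, p, q ∈ (1,∞) conjugate exponents, and μ : [0,∞) → X a locally absolutely continuous curve with metric derivative |μ'|. Suppose g : [0,∞) → [0,∞] is Borel and E := φ∘μ ∈ W^{1,1}_loc((0,∞)) ∩ C([0,∞)) satisfies |E'(t)| ≤ g(μ(t))·|μ'|(t) a.e. (chain-rule upper bound). If additionally φ(μ(0)) − φ(μ(t)) ≥ (1/q)∫₀ᵗ g(μ(r))^q dr + (1/p)∫₀ᵗ |μ'|^p(r) dr for all t ≥ 0, then equality holds in this inequality for all 0 ≤ s ≤ t, and |E'(t)| = g(μ(t))^q = |μ'|^p(t) for a.e. t > 0. -/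
open MeasureTheory Filter

private lemma young_le {p q : ℝ} (hp : 1 < p) (hq : 1 < q) (hpq : 1 / p + 1 / q = 1)
    {a b : ℝ} (ha : 0 ≤ a) (hb : 0 ≤ b) :
    a * b ≤ (1 / q) * a ^ q + (1 / p) * b ^ p := by
  have h : Real.HolderConjugate q p :=
    Real.holderConjugate_iff.mpr ⟨hq, by rw [← one_div, ← one_div, add_comm]; exact hpq⟩
  calc a * b ≤ a ^ q / q + b ^ p / p := Real.young_inequality_of_nonneg ha hb h
    _ = (1 / q) * a ^ q + (1 / p) * b ^ p := by ring

private lemma young_eq {p q : ℝ} (hp : 1 < p) (hq : 1 < q) (hpq : 1 / p + 1 / q = 1)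
    {a b : ℝ} (ha : 0 ≤ a) (hb : 0 ≤ b)
    (he : a * b = (1 / q) * a ^ q + (1 / p) * b ^ p) : a ^ q = b ^ p := by
  have p0 : (0:ℝ) < p := zero_lt_one.trans hp
  have q0 : (0:ℝ) < q := zero_lt_one.trans hq
  rcases eq_or_lt_of_le hb with hb0 | hb0
  · subst hb0
    rw [Real.zero_rpow (ne_of_gt p0)] at he ⊢
    have haq : (0:ℝ) ≤ a ^ q := Real.rpow_nonneg ha q
    have h1q : (0:ℝ) < 1 / q := by positivity
    by_contra hne
    have hpos : 0 < a ^ q := lt_of_le_of_ne haq (Ne.symm hne)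
    nlinarith [mul_pos h1q hpos, he]
  · have hpqmul : p * q = p + q := by field_simp at hpq; linarith
    have hexp : (p - 1) * q = p := by nlinarith
    set c := b ^ (p - 1) with hc
    have hc0 : 0 < c := Real.rpow_pos_of_pos hb0 _
    have hcq : c ^ q = b ^ p := by
      rw [hc, ← Real.rpow_mul hb0.le, hexp]
    have hcb : c * b = b ^ p := by
      rw [hc]
      nth_rewrite 2 [← Real.rpow_one b]
      rw [← Real.rpow_add hb0, sub_add_cancel]
    have h1 : 1 / q + 1 / p = 1 := by linarith
    have hfc : c * b = (1 / q) * c ^ q + (1 / p) * b ^ p := by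
      calc c * b = b ^ p := hcb
        _ = (1 / q + 1 / p) * b ^ p := by rw [h1, one_mul]
        _ = (1 / q) * c ^ q + (1 / p) * b ^ p := by rw [hcq]; ring
    by_cases hac : a = c
    · rw [hac, hcq]
    · exfalso
      have hsc := strictConvexOn_rpow hq
      have hmid := hsc.2 (Set.mem_Ici.mpr ha) (Set.mem_Ici.mpr hc0.le) hac
        one_half_pos one_half_pos (by norm_num)
      simp only [smul_eq_mul] at hmid
      have hm0 : (0:ℝ) ≤ 1 / 2 * a + 1 / 2 * c := by positivity
      have hy := young_le hp hq hpq hm0 hb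
      have hq' : (0:ℝ) < 1 / q := by positivity
      have hmid' := mul_lt_mul_of_pos_left hmid hq'
      nlinarith [hmid', hy, he, hfc]

/-- If `μ` is a locally absolutely continuous curve with metric
derivative `md`, `E = φ ∘ μ ∈ W^{1,1}_loc ∩ C` with chain-rule upper bound
`|E'| ≤ g(μ(·))·md`, and the energy dissipation inequality
`φ(μ(0)) − φ(μ(t)) ≥ (1/q)∫₀ᵗ g(μ)^q + (1/p)∫₀ᵗ md^p` holds for all `t ≥ 0`,
then equality holds on every interval `[s,t]` and
`|E'(t)| = g(μ(t))^q = md(t)^p` a.e. -/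
theorem energy_dissipation_equality {X : Type*} [MetricSpace X]
    (p q : ℝ) (hp : 1 < p) (hq : 1 < q) (hpq : 1 / p + 1 / q = 1)
    (μ : ℝ → X) (md : ℝ → ℝ) (hmd0 : ∀ t, 0 ≤ md t)
    (hmdloc : LocallyIntegrableOn md (Set.Ioi 0))
    (hac : ∀ s t : ℝ, 0 ≤ s → s ≤ t → dist (μ s) (μ t) ≤ ∫ r in s..t, md r)
    (hmdderiv : ∀ᵐ t ∂(volume.restrict (Set.Ioi (0 : ℝ))),
      Tendsto (fun s => dist (μ s) (μ t) / |s - t|)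
        (nhdsWithin t {t}ᶜ) (nhds (md t)))
    (φ : X → ℝ) (g : X → ℝ) (hg0 : ∀ x, 0 ≤ g x)
    (E E' : ℝ → ℝ) (hE : ∀ t, E t = φ (μ t)) (hEc : Continuous E)
    (hE'loc : LocallyIntegrableOn E' (Set.Ioi 0))
    (hW11 : ∀ s t : ℝ, 0 < s → s ≤ t → E t - E s = ∫ r in s..t, E' r)
    (hchain : ∀ᵐ t ∂(volume.restrict (Set.Ioi (0 : ℝ))),
      |E' t| ≤ g (μ t) * md t)
    (hgint : ∀ t ≥ (0 : ℝ),
      IntervalIntegrable (fun r => g (μ r) ^ q) volume 0 t)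
    (hmint : ∀ t ≥ (0 : ℝ),
      IntervalIntegrable (fun r => md r ^ p) volume 0 t)
    (hedi : ∀ t ≥ (0 : ℝ),
      (1 / q) * (∫ r in (0 : ℝ)..t, g (μ r) ^ q)
          + (1 / p) * (∫ r in (0 : ℝ)..t, md r ^ p)
        ≤ φ (μ 0) - φ (μ t)) :
    (∀ s t : ℝ, 0 ≤ s → s ≤ t →
      φ (μ s) - φ (μ t)
        = (1 / q) * (∫ r in s..t, g (μ r) ^ q)
            + (1 / p) * (∫ r in s..t, md r ^ p)) ∧
    (∀ᵐ t ∂(volume.restrict (Set.Ioi (0 : ℝ))),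
      |E' t| = g (μ t) ^ q ∧ g (μ t) ^ q = md t ^ p) := by
  have p0 : (0:ℝ) < p := zero_lt_one.trans hp
  have q0 : (0:ℝ) < q := zero_lt_one.trans hq
  have hSnn : ∀ r : ℝ, 0 ≤ (1/q) * g (μ r) ^ q + (1/p) * md r ^ p := by
    intro r
    have h1 : (0:ℝ) ≤ g (μ r) ^ q := Real.rpow_nonneg (hg0 _) _
    have h2 : (0:ℝ) ≤ md r ^ p := Real.rpow_nonneg (hmd0 _) _
    positivity
  have hGint : ∀ s t : ℝ, 0 ≤ s → s ≤ t →
      IntervalIntegrable (fun r => g (μ r) ^ q) volume s t := by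
    intro s t hs hst
    refine (hgint t (hs.trans hst)).mono_set ?_
    rw [Set.uIcc_of_le hst, Set.uIcc_of_le (hs.trans hst)]
    exact Set.Icc_subset_Icc hs le_rfl
  have hMint : ∀ s t : ℝ, 0 ≤ s → s ≤ t →
      IntervalIntegrable (fun r => md r ^ p) volume s t := by
    intro s t hs hst
    refine (hmint t (hs.trans hst)).mono_set ?_
    rw [Set.uIcc_of_le hst, Set.uIcc_of_le (hs.trans hst)]
    exact Set.Icc_subset_Icc hs le_rfl
  have hSint : ∀ s t : ℝ, 0 ≤ s → s ≤ t →
      IntervalIntegrable (fun r => (1/q) * g (μ r) ^ q + (1/p) * md r ^ p) volume s t :=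
    fun s t hs hst =>
      ((hGint s t hs hst).const_mul _).add ((hMint s t hs hst).const_mul _)
  have hE'int : ∀ s t : ℝ, 0 < s → s ≤ t → IntervalIntegrable E' volume s t := by
    intro s t hs hst
    have h1 : Set.Icc s t ⊆ Set.Ioi 0 := fun r hr => lt_of_lt_of_le hs hr.1
    have h2 := hE'loc.integrableOn_compact_subset h1 isCompact_Icc
    rw [intervalIntegrable_iff, Set.uIoc_of_le hst]
    exact h2.mono_set Set.Ioc_subset_Icc_self
  have hIS : ∀ s t : ℝ, 0 ≤ s → s ≤ t →
      (∫ r in s..t, ((1/q) * g (μ r) ^ q + (1/p) * md r ^ p)) =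
      (1/q) * (∫ r in s..t, g (μ r) ^ q) + (1/p) * (∫ r in s..t, md r ^ p) := by
    intro s t hs hst
    rw [intervalIntegral.integral_add ((hGint s t hs hst).const_mul _)
      ((hMint s t hs hst).const_mul _), intervalIntegral.integral_const_mul,
      intervalIntegral.integral_const_mul]
  have stepA : ∀ s t : ℝ, 0 < s → s ≤ t →
      E s - E t ≤ ∫ r in s..t, ((1/q) * g (μ r) ^ q + (1/p) * md r ^ p) := by
    intro s t hs hst
    have hsub : Set.Icc s t ⊆ Set.Ioi 0 := fun r hr => lt_of_lt_of_le hs hr.1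
    have hae : (fun r => -E' r) ≤ᵐ[volume.restrict (Set.Icc s t)]
        fun r => (1/q) * g (μ r) ^ q + (1/p) * md r ^ p := by
      filter_upwards [ae_restrict_of_ae_restrict_of_subset hsub hchain] with r hr
      have hy := young_le hp hq hpq (hg0 (μ r)) (hmd0 r)
      have h1 : -E' r ≤ |E' r| := neg_le_abs _
      linarith
    have hmono := intervalIntegral.integral_mono_ae_restrict hst
      ((hE'int s t hs hst).neg) (hSint s t hs.le hst) hae
    simp only [Pi.neg_apply] at hmono
    rw [intervalIntegral.integral_neg] at hmono
    have hw := hW11 s t hs hst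
    linarith
  have eq0 : ∀ u : ℝ, 0 ≤ u →
      E 0 - E u = (1/q) * (∫ r in (0:ℝ)..u, g (μ r) ^ q)
        + (1/p) * (∫ r in (0:ℝ)..u, md r ^ p) := by
    intro u hu
    rcases eq_or_lt_of_le hu with h0 | h0
    · rw [← h0]; simp
    · refine le_antisymm ?_ ?_
      · have hlim : Tendsto (fun ε => E ε - E u) (nhdsWithin 0 (Set.Ioi 0))
            (nhds (E 0 - E u)) :=
          ((hEc.tendsto 0).sub tendsto_const_nhds).mono_left nhdsWithin_le_nhds
        have hev : ∀ᶠ ε in nhdsWithin (0:ℝ) (Set.Ioi 0),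
            E ε - E u ≤ ∫ r in (0:ℝ)..u, ((1/q) * g (μ r) ^ q + (1/p) * md r ^ p) := by
          filter_upwards [Ioo_mem_nhdsGT_of_mem (Set.mem_Ico.mpr ⟨le_refl (0:ℝ), h0⟩)]
            with ε hε
          have h1 := stepA ε u hε.1 hε.2.le
          have hadd := intervalIntegral.integral_add_adjacent_intervals
            (hSint 0 ε le_rfl hε.1.le) (hSint ε u hε.1.le hε.2.le)
          have hnn : 0 ≤ ∫ r in (0:ℝ)..ε, ((1/q) * g (μ r) ^ q + (1/p) * md r ^ p) :=
            intervalIntegral.integral_nonneg hε.1.le fun r _ => hSnn r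
          linarith
        have hle := le_of_tendsto hlim hev
        rw [hIS 0 u le_rfl hu] at hle
        exact hle
      · rw [hE 0, hE u]
        exact hedi u hu
  have part1 : ∀ s t : ℝ, 0 ≤ s → s ≤ t →
      φ (μ s) - φ (μ t)
        = (1 / q) * (∫ r in s..t, g (μ r) ^ q)
            + (1 / p) * (∫ r in s..t, md r ^ p) := by
    intro s t hs hst
    have e1 := eq0 s hs
    have e2 := eq0 t (hs.trans hst)
    have hGadd := intervalIntegral.integral_add_adjacent_intervals
      (hGint 0 s le_rfl hs) (hGint s t hs hst)
    have hMadd := intervalIntegral.integral_add_adjacent_intervals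
      (hMint 0 s le_rfl hs) (hMint s t hs hst)
    calc φ (μ s) - φ (μ t) = (E 0 - E t) - (E 0 - E s) := by rw [hE s, hE t]; ring
      _ = ((1/q) * (∫ r in (0:ℝ)..t, g (μ r) ^ q)
            + (1/p) * (∫ r in (0:ℝ)..t, md r ^ p))
          - ((1/q) * (∫ r in (0:ℝ)..s, g (μ r) ^ q)
            + (1/p) * (∫ r in (0:ℝ)..s, md r ^ p)) := by rw [← e1, ← e2]
      _ = (1/q) * (∫ r in s..t, g (μ r) ^ q) + (1/p) * (∫ r in s..t, md r ^ p) := by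
          rw [← hGadd, ← hMadd]; ring
  refine ⟨part1, ?_⟩
  have hzero : ∀ s t : ℝ, 0 < s → s ≤ t → ∀ᵐ r ∂(volume : Measure ℝ),
      r ∈ Set.Ioc s t → (1/q) * g (μ r) ^ q + (1/p) * md r ^ p + E' r = 0 := by
    intro s t hs hst
    have hiS := hSint s t hs.le hst
    have hiE := hE'int s t hs hst
    have hintOn : IntegrableOn (fun r => (1/q) * g (μ r) ^ q + (1/p) * md r ^ p + E' r)
        (Set.Ioc s t) volume := by
      have h1 := hiS.add hiE
      rw [intervalIntegrable_iff, Set.uIoc_of_le hst] at h1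
      exact h1
    have hnn : 0 ≤ᵐ[volume.restrict (Set.Ioc s t)]
        fun r => (1/q) * g (μ r) ^ q + (1/p) * md r ^ p + E' r := by
      have hsub : Set.Ioc s t ⊆ Set.Ioi 0 := fun r hr => hs.trans hr.1
      filter_upwards [ae_restrict_of_ae_restrict_of_subset hsub hchain] with r hr
      have hy := young_le hp hq hpq (hg0 (μ r)) (hmd0 r)
      have h1 : -E' r ≤ |E' r| := neg_le_abs _
      dsimp only [Pi.zero_apply]
      linarith
    have hint0 : ∫ r in Set.Ioc s t, ((1/q) * g (μ r) ^ q + (1/p) * md r ^ p + E' r) = 0 := by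
      have h1 : (∫ r in s..t, ((1/q) * g (μ r) ^ q + (1/p) * md r ^ p + E' r)) = 0 := by
        rw [intervalIntegral.integral_add hiS hiE, hIS s t hs.le hst]
        have h2 := hW11 s t hs hst
        rw [hE s, hE t] at h2
        have h3 := part1 s t hs.le hst
        linarith
      rw [intervalIntegral.integral_of_le hst] at h1
      exact h1
    have hz := (setIntegral_eq_zero_iff_of_nonneg_ae hnn hintOn).mp hint0
    rw [EventuallyEq, ae_restrict_iff' measurableSet_Ioc] at hz
    filter_upwards [hz] with r hr hmem
    exact hr hmem
  have key : ∀ᵐ r ∂(volume.restrict (Set.Ioi (0:ℝ))),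
      (1/q) * g (μ r) ^ q + (1/p) * md r ^ p + E' r = 0 := by
    rw [ae_restrict_iff' measurableSet_Ioi]
    have hall := ae_all_iff.mpr fun n : ℕ =>
      hzero (1/((n:ℝ)+1)) ((n:ℝ)+1) (by positivity) (by
        have h1 : (1:ℝ)/((n:ℝ)+1) ≤ 1 := by
          rw [div_le_one (by positivity)]
          have h0 : (0:ℝ) ≤ (n:ℝ) := Nat.cast_nonneg n
          linarith
        have h2 : (1:ℝ) ≤ (n:ℝ)+1 := by
          have h0 : (0:ℝ) ≤ (n:ℝ) := Nat.cast_nonneg n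
          linarith
        linarith)
    filter_upwards [hall] with r hr hr0
    have hr0' : (0:ℝ) < r := hr0
    obtain ⟨n1, hn1⟩ := exists_nat_one_div_lt hr0'
    obtain ⟨n2, hn2⟩ := exists_nat_ge r
    refine hr (max n1 n2) ⟨lt_of_le_of_lt ?_ hn1, ?_⟩
    · apply one_div_le_one_div_of_le (by positivity)
      have h3 : (n1:ℝ) ≤ ((max n1 n2 : ℕ):ℝ) := by exact_mod_cast Nat.le_max_left n1 n2
      linarith
    · have h4 : (n2:ℝ) ≤ ((max n1 n2 : ℕ):ℝ) := by exact_mod_cast Nat.le_max_right n1 n2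
      linarith
  filter_upwards [key, hchain] with r hk hc
  have hy := young_le hp hq hpq (hg0 (μ r)) (hmd0 r)
  have h1 : -E' r ≤ |E' r| := neg_le_abs _
  have habs : |E' r| = (1/q) * g (μ r) ^ q + (1/p) * md r ^ p := by linarith
  have hgm : g (μ r) * md r = (1/q) * g (μ r) ^ q + (1/p) * md r ^ p := by linarith
  have hqe := young_eq hp hq hpq (hg0 (μ r)) (hmd0 r) hgm
  refine ⟨?_, hqe⟩
  have hsum : (1/q) * g (μ r) ^ q + (1/p) * g (μ r) ^ q = g (μ r) ^ q := by
    rw [← add_mul, show 1/q + 1/p = 1 from by linarith, one_mul]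
  rw [habs, ← hqe]
  exact hsum
end
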